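/- Let q ≥ 2 and k ≥ 1 be integers, Δ = (q^k − 1)/(q − 1), and let e₁, e₂, α, β be integers with 0 ≤ α < q^k − 1, 0 ≤ β < q − 1 and e₂·α + Δ·β ≡ 1 (mod q^k − 1). Set d = gcd(q − 1, k·e₁ − e₂). If d > 1, then Δ·(e₁·α + β) ≡ 1 (mod d). -/

import Mathlib

/-- If `d = gcd(q − 1, k·e₁ − e₂) > 1`, then `Δ·(e₁·α + β) ≡ 1 (mod d)`. -/
theorem delta_mul_congr_one
    (q k : ℕ) (hq : 2 ≤ q) (hk : 1 ≤ k)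
    (Δ e₁ e₂ α β : ℤ) (hΔ : Δ * ((q : ℤ) - 1) = (q : ℤ) ^ k - 1)
    (hα : 0 ≤ α ∧ α < (q : ℤ) ^ k - 1) (hβ : 0 ≤ β ∧ β < (q : ℤ) - 1)
    (hcong : e₂ * α + Δ * β ≡ 1 [ZMOD (q : ℤ) ^ k - 1])
    (hd : 1 < Int.gcd ((q : ℤ) - 1) ((k : ℤ) * e₁ - e₂)) :
    Δ * (e₁ * α + β) ≡ 1 [ZMOD (Int.gcd ((q : ℤ) - 1) ((k : ℤ) * e₁ - e₂) : ℤ)] := by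
  set d : ℤ := (Int.gcd ((q : ℤ) - 1) ((k : ℤ) * e₁ - e₂) : ℤ) with hdd
  have hq1 : (q : ℤ) - 1 ≠ 0 := by
    have : (2 : ℤ) ≤ (q : ℤ) := by exact_mod_cast hq
    omega
  have hd1 : d ∣ (q : ℤ) - 1 := Int.gcd_dvd_left _ _
  have hd2 : d ∣ (k : ℤ) * e₁ - e₂ := Int.gcd_dvd_right _ _
  have hdvd : d ∣ (q : ℤ) ^ k - 1 := by
    rw [← hΔ]; exact hd1.mul_left Δ
  have hc : e₂ * α + Δ * β ≡ 1 [ZMOD d] := Int.ModEq.of_dvd hdvd hcong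
  -- Δ = geometric sum
  have hΔsum : Δ = ∑ i ∈ Finset.range k, (q : ℤ) ^ i := by
    have := geom_sum_mul (q : ℤ) k
    exact mul_right_cancel₀ hq1 (by rw [hΔ, ← this])
  have hΔk1 : Δ ≡ (k : ℤ) [ZMOD (q : ℤ) - 1] := by
    have hdvdsum : ((q : ℤ) - 1) ∣ Δ - (k : ℤ) := by
      have : Δ - (k : ℤ) = ∑ i ∈ Finset.range k, ((q : ℤ) ^ i - 1) := by
        rw [hΔsum, Finset.sum_sub_distrib]; simp
      rw [this]
      exact Finset.dvd_sum fun i _ => by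
        simpa using sub_dvd_pow_sub_pow (q : ℤ) 1 i
    exact (Int.modEq_iff_dvd.mpr (by simpa using hdvdsum.neg_right)).symm.symm
  have hΔk : Δ ≡ (k : ℤ) [ZMOD d] := Int.ModEq.of_dvd hd1 hΔk1
  have hke : (k : ℤ) * e₁ ≡ e₂ [ZMOD d] := by
    refine (Int.modEq_iff_dvd.mpr ?_).symm
    exact hd2
  calc Δ * (e₁ * α + β) = (Δ * e₁) * α + Δ * β := by ring
    _ ≡ ((k : ℤ) * e₁) * α + Δ * β [ZMOD d] :=
        Int.ModEq.add (Int.ModEq.mul (hΔk.mul_right e₁) (Int.ModEq.refl α)) (Int.ModEq.refl _)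
    _ ≡ e₂ * α + Δ * β [ZMOD d] :=
        Int.ModEq.add (hke.mul_right α) (Int.ModEq.refl _)
    _ ≡ 1 [ZMOD d] := hc
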